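/- Let X be a nonempty set, let φ₁ : X → X and, for every integer k ≥ 2, let φ_k : X² → X and u_k ∈ {ℓ, r} be given; set δ_{φ_1} = φ₁ and δ_{φ_k}(u) = φ_k(u,u) for k ≥ 2. Then there exists a B-associative ε-standard operation F : X* → X ∪ {ε} with F₁ = φ₁ and δ^{u_k}_{F_k} = φ_k for every k ≥ 2 if and only if the following two conditions hold: (a) for every k ≥ 1 and all u, v ∈ X, φ_{k+1}(u,v) = φ_{k+1}(δ_{φ_k}(u), v) if u_{k+1} = r, and φ_{k+1}(u,v) = φ_{k+1}(u, δ_{φ_k}(v)) if u_{k+1} = ℓ; (b) there exists an arity-wise range-idempotent ε-standard operation G : X* → X ∪ {ε} with G₁ = φ₁ such that for every k ≥ 1, all letters x, z ∈ X and every string y ∈ X^{k-1}: G_{k+1}(xyz) = φ_{k+1}(G_k(xy), z) if u_{k+1} = r and G_{k+1}(xyz) = φ_{k+1}(x, G_k(yz)) if u_{k+1} = ℓ, and moreover G_{k+1}(xyz) = δ^ℓ_{G_{k+1}}(x, G_k(yz)) if u_{k+1} = r and G_{k+1}(xyz) = δ^r_{G_{k+1}}(G_k(xy), z) if u_{k+1}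 = ℓ. If these conditions hold, then F = G is such an operation. -/
import Mathlib


/-- `RepStr F y` is the string `F(y)^{|y|}`: `|y|` copies of `F y` if `F y ∈ X`,
and the empty string if `F y = ε` (here `ε` is encoded by `none`). -/
def RepStr {X : Type*} (F : List X → Option X) (y : List X) : List X :=
  match F y with
  | some a => List.replicate y.length a
  | none => []

/-- `F` is barycentrically associative. -/
def BAssoc {X : Type*} (F : List X → Option X) : Prop :=
  ∀ x y z : List X, F (x ++ y ++ z) = F (x ++ RepStr F y ++ z)

/-- `F` is ε-standard: `F x = ε` iff `x = ε`. -/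
def EpsStd {X : Type*} (F : List X → Option X) : Prop :=
  ∀ x : List X, F x = none ↔ x = []

/-- `F` is barycentrically preassociative. -/
def BPreassoc {X Y : Type*} (F : List X → Y) : Prop :=
  ∀ x y y' z : List X, y.length = y'.length → F y = F y' →
    F (x ++ y ++ z) = F (x ++ y' ++ z)

/-- `F` is arity-wise range-idempotent: `F (F(x)^{|x|}) = F x`. -/
def AWRI {X : Type*} (F : List X → Option X) : Prop :=
  ∀ x : List X, F (RepStr F x) = F x

/-- `F` is arity-wise quasi-range-idempotent: `ran δ_{F_n} = ran F_n` for all `n ≥ 1`. -/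
def AWQRI {X Y : Type*} (F : List X → Y) : Prop :=
  ∀ n : ℕ, 1 ≤ n →
    Set.range (fun u : X => F (List.replicate n u)) = F '' {l : List X | l.length = n}

/-- `g` is a quasi-inverse of `f`: `f (g b) = b` for every `b ∈ ran f`, and
`g (ran f) = ran g`. -/
def QuasiInv {α β : Type*} (f : α → β) (g : β → α) : Prop :=
  (∀ b ∈ Set.range f, f (g b) = b) ∧ g '' Set.range f = Set.range g

/-- `dphi phi1 phi k` is the diagonal section `δ_{φ_k}`: `φ₁` for `k = 1` and
`u ↦ φ_k(u,u)` for `k ≥ 2`.  (The value at `k = 0` is irrelevant.) -/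
def dphi {X : Type*} (phi1 : X → X) (phi : ℕ → X → X → X) : ℕ → X → X
  | 0 => id
  | 1 => phi1
  | (k + 2) => fun u => phi (k + 2) u u


section Aux

variable {X : Type*} {phi1 : X → X} {phi : ℕ → X → X → X} {side : ℕ → Bool}
  {G : List X → Option X}

/-- Condition (a). -/
def CondA (phi1 : X → X) (phi : ℕ → X → X → X) (side : ℕ → Bool) : Prop :=
  ∀ k : ℕ, 1 ≤ k → ∀ u v : X,
    (side (k + 1) = true → phi (k + 1) u v = phi (k + 1) (dphi phi1 phi k u) v) ∧
    (side (k + 1) = false → phi (k + 1) u v = phi (k + 1) u (dphi phi1 phi k v))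

/-- The recursive part of condition (b). -/
def CondB {X : Type*} (phi : ℕ → X → X → X) (side : ℕ → Bool)
    (G : List X → Option X) : Prop :=
  ∀ k : ℕ, 1 ≤ k → ∀ (x z : X) (y : List X), y.length + 1 = k →
    (side (k + 1) = true →
      (∀ a : X, G (x :: y) = some a →
        G (x :: (y ++ [z])) = some (phi (k + 1) a z)) ∧
      (∀ b : X, G (y ++ [z]) = some b →
        G (x :: (y ++ [z])) = G (x :: List.replicate k b))) ∧
    (side (k + 1) = false →
      (∀ b : X, G (y ++ [z]) = some b →
        G (x :: (y ++ [z])) = some (phi (k + 1) x b)) ∧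
      (∀ a : X, G (x :: y) = some a →
        G (x :: (y ++ [z])) = G (List.replicate k a ++ [z])))

lemma eps_some (h : EpsStd G) {s : List X} (hs : s ≠ []) : ∃ a, G s = some a := by
  cases hG : G s with
  | none => exact absurd ((h s).1 hG) hs
  | some a => exact ⟨a, rfl⟩

lemma repStr_eq {s : List X} {b : X} (h : G s = some b) :
    RepStr G s = List.replicate s.length b := by simp [RepStr, h]

lemma peelR (hRec : CondB phi side G) {t : List X} {a : X} {k : ℕ}
    (hk : t.length = k) (hne : t ≠ []) (ht : G t = some a)
    (hside : side (k + 1) = true) (c : X) :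
    G (t ++ [c]) = some (phi (k + 1) a c) := by
  cases t with
  | nil => exact absurd rfl hne
  | cons x y =>
    have hy : y.length + 1 = k := by simpa using hk
    have h := ((hRec k (by omega) x c y hy).1 hside).1 a ht
    simpa using h

lemma peelL (hRec : CondB phi side G) {t : List X} {b : X} {k : ℕ}
    (hk : t.length = k) (hne : t ≠ []) (ht : G t = some b)
    (hside : side (k + 1) = false) (x : X) :
    G (x :: t) = some (phi (k + 1) x b) := by
  rcases t.eq_nil_or_concat with rfl | ⟨y, z, rfl⟩
  · exact absurd rfl hne
  · simp only [List.concat_eq_append] at hk ht ⊢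
    have hy : y.length + 1 = k := by simpa using hk
    exact ((hRec k (by omega) x z y hy).2 hside).1 b ht

lemma contractR (hRec : CondB phi side G) {t : List X} {b : X} {k : ℕ}
    (hk : t.length = k) (hne : t ≠ []) (ht : G t = some b)
    (hside : side (k + 1) = true) (x : X) :
    G (x :: t) = G (x :: List.replicate k b) := by
  rcases t.eq_nil_or_concat with rfl | ⟨y, z, rfl⟩
  · exact absurd rfl hne
  · simp only [List.concat_eq_append] at hk ht ⊢
    have hy : y.length + 1 = k := by simpa using hk
    exact ((hRec k (by omega) x z y hy).1 hside).2 b ht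

lemma contractL (hRec : CondB phi side G) {s : List X} {a : X} {k : ℕ}
    (hk : s.length = k) (hne : s ≠ []) (hs : G s = some a)
    (hside : side (k + 1) = false) (c : X) :
    G (s ++ [c]) = G (List.replicate k a ++ [c]) := by
  cases s with
  | nil => exact absurd rfl hne
  | cons x y =>
    have hy : y.length + 1 = k := by simpa using hk
    have h := ((hRec k (by omega) x c y hy).2 hside).2 a hs
    simpa using h

lemma diag (hA : CondA phi1 phi side) (hG1 : ∀ u, G [u] = some (phi1 u))
    (hRec : CondB phi side G) :
    ∀ j (u : X), G (List.replicate (j + 1) u) = some (dphi phi1 phi (j + 1) u) := by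
  intro j
  induction j with
  | zero => intro u; simpa [dphi] using hG1 u
  | succ j ih =>
    intro u
    have hprev := ih u
    cases hside : side (j + 1 + 1) with
    | true =>
      have hb : G (u :: List.replicate j u) = some (dphi phi1 phi (j + 1) u) := by
        rw [← List.replicate_succ]; exact hprev
      have h2 := ((hRec (j + 1) (by omega) u u (List.replicate j u) (by simp)).1 hside).1 _ hb
      have h3 : phi (j + 2) (dphi phi1 phi (j + 1) u) u = phi (j + 2) u u :=
        ((hA (j + 1) (by omega) u u).1 hside).symm
      calc G (List.replicate (j + 2) u) = G (u :: (List.replicate j u ++ [u])) := by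
            rw [List.replicate_succ, List.replicate_succ']
        _ = some (phi (j + 2) (dphi phi1 phi (j + 1) u) u) := h2
        _ = some (dphi phi1 phi (j + 2) u) := by rw [h3]; simp [dphi]
    | false =>
      have hb : G (List.replicate j u ++ [u]) = some (dphi phi1 phi (j + 1) u) := by
        rw [← List.replicate_succ']; exact hprev
      have h2 := ((hRec (j + 1) (by omega) u u (List.replicate j u) (by simp)).2 hside).1 _ hb
      have h3 : phi (j + 2) u (dphi phi1 phi (j + 1) u) = phi (j + 2) u u :=
        ((hA (j + 1) (by omega) u u).2 hside).symm
      calc G (List.replicate (j + 2) u) = G (u :: (List.replicate j u ++ [u])) := by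
            rw [List.replicate_succ, List.replicate_succ']
        _ = some (phi (j + 2) u (dphi phi1 phi (j + 1) u)) := h2
        _ = some (dphi phi1 phi (j + 2) u) := by rw [h3]; simp [dphi]

lemma secR (hA : CondA phi1 phi side) (hG1 : ∀ u, G [u] = some (phi1 u))
    (hRec : CondB phi side G) (j : ℕ) (u v : X) (hside : side (j + 2) = true) :
    G (List.replicate (j + 1) u ++ [v]) = some (phi (j + 2) u v) := by
  have h1 := peelR hRec (t := List.replicate (j + 1) u) (k := j + 1) (by simp)
    (by simp) (diag hA hG1 hRec j u) hside v
  rw [h1, ← (hA (j + 1) (by omega) u v).1 hside]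

lemma secL (hA : CondA phi1 phi side) (hG1 : ∀ u, G [u] = some (phi1 u))
    (hRec : CondB phi side G) (j : ℕ) (u v : X) (hside : side (j + 2) = false) :
    G (u :: List.replicate (j + 1) v) = some (phi (j + 2) u v) := by
  have h1 := peelL hRec (t := List.replicate (j + 1) v) (k := j + 1) (by simp)
    (by simp) (diag hA hG1 hRec j v) hside u
  rw [h1, ← (hA (j + 1) (by omega) u v).2 hside]

end Aux
section Key
variable {X : Type*} {phi1 : X → X} {phi : ℕ → X → X → X} {side : ℕ → Bool}
  {G : List X → Option X}

lemma key (hE : EpsStd G) (hAW : AWRI G) (hRec : CondB phi side G) :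
    ∀ N (x z w : List X) (b : X), w ≠ [] → G w = some b →
      x.length + z.length = N →
      G (x ++ w ++ z) = G (x ++ List.replicate w.length b ++ z) := by
  intro N
  induction N with
  | zero =>
    intro x z w b hw hb hlen
    obtain rfl : x = [] := List.eq_nil_of_length_eq_zero (by omega)
    obtain rfl : z = [] := List.eq_nil_of_length_eq_zero (by omega)
    simp only [List.nil_append, List.append_nil]
    have h := hAW w
    rw [repStr_eq hb] at h
    exact h.symm
  | succ N ih =>
    intro x z w b hw hb hlen
    have hwpos : 0 < w.length := List.length_pos_iff.mpr hw
    cases hside : side (x.length + w.length + z.length) with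
    | true =>
      rcases z.eq_nil_or_concat with rfl | ⟨z', c, rfl⟩
      · cases x with
        | nil => simp at hlen
        | cons a x' =>
          have hL : (a :: x').length + w.length + ([] : List X).length
              = x'.length + w.length + 1 := by
            simp only [List.length_cons, List.length_nil]; omega
          rw [hL] at hside
          obtain ⟨d, hd⟩ := eps_some hE (s := x' ++ w)
            (List.length_pos_iff.mp (by simp; omega))
          have e1 := contractR hRec (t := x' ++ w) (k := x'.length + w.length)
            (by simp; try omega) (List.length_pos_iff.mp (by simp; omega)) hd hside a
          have e2 := ih x' [] w b hw hb (by simp only [List.length_append, List.length_cons, List.length_nil] at hlen ⊢; omega)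
          simp only [List.append_nil] at e2
          have hd2 : G (x' ++ List.replicate w.length b) = some d := by
            rw [← e2]; exact hd
          have e3 := contractR hRec (t := x' ++ List.replicate w.length b)
            (k := x'.length + w.length) (by simp; try omega)
            (List.length_pos_iff.mp (by simp; omega)) hd2 hside a
          simp only [List.append_nil, List.cons_append]
          rw [e1, e3]
      · simp only [List.concat_eq_append] at *
        have hL : x.length + w.length + (z' ++ [c]).length
            = (x.length + w.length + z'.length) + 1 := by simp; try omega
        rw [hL] at hside
        obtain ⟨a', ha'⟩ := eps_some hE (s := x ++ w ++ z')
          (List.length_pos_iff.mp (by simp; omega))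
        have e1 := peelR hRec (t := x ++ w ++ z')
          (k := x.length + w.length + z'.length) (by simp; try omega)
          (List.length_pos_iff.mp (by simp; omega)) ha' hside c
        have e2 := ih x z' w b hw hb (by simp only [List.length_append, List.length_cons, List.length_nil] at hlen ⊢; omega)
        have ha2 : G (x ++ List.replicate w.length b ++ z') = some a' := by
          rw [← e2]; exact ha'
        have e3 := peelR hRec (t := x ++ List.replicate w.length b ++ z')
          (k := x.length + w.length + z'.length) (by simp; try omega)
          (List.length_pos_iff.mp (by simp; omega)) ha2 hside c
        rw [show x ++ w ++ (z' ++ [c]) = (x ++ w ++ z') ++ [c] by simp,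
          show x ++ List.replicate w.length b ++ (z' ++ [c])
            = (x ++ List.replicate w.length b ++ z') ++ [c] by simp, e1, e3]
    | false =>
      cases x with
      | nil =>
        rcases z.eq_nil_or_concat with rfl | ⟨z', c, rfl⟩
        · simp at hlen
        · simp only [List.concat_eq_append] at *
          have hL : ([] : List X).length + w.length + (z' ++ [c]).length
              = (w.length + z'.length) + 1 := by simp; try omega
          rw [hL] at hside
          obtain ⟨d, hd⟩ := eps_some hE (s := w ++ z')
            (List.length_pos_iff.mp (by simp; omega))
          have e1 := contractL hRec (s := w ++ z') (k := w.length + z'.length)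
            (by simp; try omega) (List.length_pos_iff.mp (by simp; omega)) hd hside c
          have e2 := ih [] z' w b hw hb (by simp only [List.length_append, List.length_cons, List.length_nil] at hlen ⊢; omega)
          simp only [List.nil_append] at e2
          have hd2 : G (List.replicate w.length b ++ z') = some d := by
            rw [← e2]; exact hd
          have e3 := contractL hRec (s := List.replicate w.length b ++ z')
            (k := w.length + z'.length) (by simp; try omega)
            (List.length_pos_iff.mp (by simp; omega)) hd2 hside c
          simp only [List.nil_append]
          rw [show w ++ (z' ++ [c]) = (w ++ z') ++ [c] by simp,
            show List.replicate w.length b ++ (z' ++ [c])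
              = (List.replicate w.length b ++ z') ++ [c] by simp, e1, e3]
      | cons a x' =>
        have hL : (a :: x').length + w.length + z.length
            = (x'.length + w.length + z.length) + 1 := by
          simp only [List.length_cons]; omega
        rw [hL] at hside
        obtain ⟨d, hd⟩ := eps_some hE (s := x' ++ w ++ z)
          (List.length_pos_iff.mp (by simp; omega))
        have e1 := peelL hRec (t := x' ++ w ++ z)
          (k := x'.length + w.length + z.length) (by simp; try omega)
          (List.length_pos_iff.mp (by simp; omega)) hd hside a
        have e2 := ih x' z w b hw hb (by simp only [List.length_append, List.length_cons, List.length_nil] at hlen ⊢; omega)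
        have hd2 : G (x' ++ List.replicate w.length b ++ z) = some d := by
          rw [← e2]; exact hd
        have e3 := peelL hRec (t := x' ++ List.replicate w.length b ++ z)
          (k := x'.length + w.length + z.length) (by simp; try omega)
          (List.length_pos_iff.mp (by simp; omega)) hd2 hside a
        simp only [List.cons_append]
        rw [e1, e3]

lemma suffMain (phi1 : X → X) (phi : ℕ → X → X → X) (side : ℕ → Bool)
    (G : List X → Option X) (hA : CondA phi1 phi side) (hE : EpsStd G)
    (hAW : AWRI G) (h1 : ∀ u : X, G [u] = some (phi1 u))
    (hRec : CondB phi side G) :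
    BAssoc G ∧ EpsStd G ∧ (∀ u : X, G [u] = some (phi1 u)) ∧
      (∀ k : ℕ, 2 ≤ k → ∀ u v : X,
        (side k = true → G (List.replicate (k - 1) u ++ [v]) = some (phi k u v)) ∧
        (side k = false → G (u :: List.replicate (k - 1) v) = some (phi k u v))) := by
  refine ⟨?_, hE, h1, ?_⟩
  · intro x y z
    rcases eq_or_ne y [] with rfl | hy
    · have h : RepStr G ([] : List X) = [] := by
        cases h : G ([] : List X) <;> simp [RepStr, h]
      rw [h]
    · obtain ⟨b, hb⟩ := eps_some hE hy
      rw [repStr_eq hb]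
      exact key hE hAW hRec (x.length + z.length) x z y b hy hb rfl
  · intro k hk u v
    obtain ⟨j, rfl⟩ : ∃ j, k = j + 2 := ⟨k - 2, by omega⟩
    have hsub : j + 2 - 1 = j + 1 := by omega
    rw [hsub]
    exact ⟨fun hs => secR hA h1 hRec j u v hs, fun hs => secL hA h1 hRec j u v hs⟩

end Key
section Fwd
variable {X : Type*} {phi1 : X → X} {phi : ℕ → X → X → X} {side : ℕ → Bool}
  {F : List X → Option X}

lemma fwd_diag (h1 : ∀ u : X, F [u] = some (phi1 u))
    (hsec : ∀ k : ℕ, 2 ≤ k → ∀ u v : X,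
      (side k = true → F (List.replicate (k - 1) u ++ [v]) = some (phi k u v)) ∧
      (side k = false → F (u :: List.replicate (k - 1) v) = some (phi k u v))) :
    ∀ j (u : X), F (List.replicate (j + 1) u) = some (dphi phi1 phi (j + 1) u) := by
  intro j u
  cases j with
  | zero => simpa [dphi] using h1 u
  | succ j =>
    cases hs : side (j + 2) with
    | true =>
      have h := (hsec (j + 2) (by omega) u u).1 hs
      rw [show j + 1 + 1 = j + 2 from rfl, List.replicate_succ']
      rw [show j + 2 - 1 = j + 1 by omega] at h
      rw [h]; simp [dphi]
    | false =>
      have h := (hsec (j + 2) (by omega) u u).2 hs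
      rw [show j + 1 + 1 = j + 2 from rfl, List.replicate_succ]
      rw [show j + 2 - 1 = j + 1 by omega] at h
      rw [h]; simp [dphi]

lemma fwd_condA (hB : BAssoc F) (h1 : ∀ u : X, F [u] = some (phi1 u))
    (hsec : ∀ k : ℕ, 2 ≤ k → ∀ u v : X,
      (side k = true → F (List.replicate (k - 1) u ++ [v]) = some (phi k u v)) ∧
      (side k = false → F (u :: List.replicate (k - 1) v) = some (phi k u v))) :
    CondA phi1 phi side := by
  intro k hk u v
  obtain ⟨j, rfl⟩ : ∃ j, k = j + 1 := ⟨k - 1, by omega⟩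
  have hsub : j + 2 - 1 = j + 1 := by omega
  constructor
  · intro hs
    have s1 := (hsec (j + 2) (by omega) u v).1 hs
    have s2 := (hsec (j + 2) (by omega) (dphi phi1 phi (j + 1) u) v).1 hs
    rw [hsub] at s1 s2
    have hb := hB [] (List.replicate (j + 1) u) [v]
    rw [repStr_eq (fwd_diag h1 hsec j u)] at hb
    simp only [List.nil_append, List.length_replicate] at hb
    exact Option.some.inj (s1.symm.trans (hb.trans s2))
  · intro hs
    have s1 := (hsec (j + 2) (by omega) u v).2 hs
    have s2 := (hsec (j + 2) (by omega) u (dphi phi1 phi (j + 1) v)).2 hs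
    rw [hsub] at s1 s2
    have hb := hB [u] (List.replicate (j + 1) v) []
    rw [repStr_eq (fwd_diag h1 hsec j v)] at hb
    simp only [List.length_replicate, List.append_nil, List.cons_append,
      List.nil_append, List.singleton_append] at hb
    exact Option.some.inj (s1.symm.trans (hb.trans s2))

lemma fwd_condB (hB : BAssoc F)
    (hsec : ∀ k : ℕ, 2 ≤ k → ∀ u v : X,
      (side k = true → F (List.replicate (k - 1) u ++ [v]) = some (phi k u v)) ∧
      (side k = false → F (u :: List.replicate (k - 1) v) = some (phi k u v))) :
    CondB phi side F := by
  intro k hk x z y hy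
  have hk2 : 2 ≤ k + 1 := by omega
  have hsub : k + 1 - 1 = k := by omega
  refine ⟨fun hs => ⟨?_, ?_⟩, fun hs => ⟨?_, ?_⟩⟩
  · intro a ha
    have hb := hB [] (x :: y) [z]
    rw [repStr_eq ha] at hb
    simp only [List.nil_append, List.length_cons, hy] at hb
    have s := (hsec (k + 1) hk2 a z).1 hs
    rw [hsub] at s
    calc F (x :: (y ++ [z])) = F ((x :: y) ++ [z]) := rfl
      _ = F (List.replicate k a ++ [z]) := hb
      _ = some (phi (k + 1) a z) := s
  · intro b hb2
    have hb := hB [x] (y ++ [z]) []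
    rw [repStr_eq hb2] at hb
    simp only [List.append_nil, List.singleton_append, List.cons_append,
      List.nil_append, List.length_append, List.length_cons, List.length_nil] at hb
    rw [show y.length + (0 + 1) = k by omega] at hb
    exact hb
  · intro b hb2
    have hb := hB [x] (y ++ [z]) []
    rw [repStr_eq hb2] at hb
    simp only [List.append_nil, List.singleton_append, List.cons_append,
      List.nil_append, List.length_append, List.length_cons, List.length_nil] at hb
    rw [show y.length + (0 + 1) = k by omega] at hb
    have s := (hsec (k + 1) hk2 x b).2 hs
    rw [hsub] at s
    exact hb.trans s
  · intro a ha
    have hb := hB [] (x :: y) [z]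
    rw [repStr_eq ha] at hb
    simp only [List.nil_append, List.length_cons, hy] at hb
    exact hb

end Fwd
/-- Existence of a B-associative ε-standard operation `F` with
`F₁ = φ₁` and `δ^{u_k}_{F_k} = φ_k` for all `k ≥ 2` is equivalent to
conditions (a) and (b); moreover, when they hold, `F = G` works.
Here `side k = true` encodes `u_k = r` and `side k = false` encodes `u_k = ℓ`. -/
theorem stmt_7 {X : Type*} [Nonempty X] (phi1 : X → X) (phi : ℕ → X → X → X)
    (side : ℕ → Bool) :
    ((∃ F : List X → Option X, BAssoc F ∧ EpsStd F ∧
        (∀ u : X, F [u] = some (phi1 u)) ∧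
        (∀ k : ℕ, 2 ≤ k → ∀ u v : X,
          (side k = true → F (List.replicate (k - 1) u ++ [v]) = some (phi k u v)) ∧
          (side k = false → F (u :: List.replicate (k - 1) v) = some (phi k u v))))
      ↔
      ((∀ k : ℕ, 1 ≤ k → ∀ u v : X,
          (side (k + 1) = true →
            phi (k + 1) u v = phi (k + 1) (dphi phi1 phi k u) v) ∧
          (side (k + 1) = false →
            phi (k + 1) u v = phi (k + 1) u (dphi phi1 phi k v))) ∧
       (∃ G : List X → Option X, EpsStd G ∧ AWRI G ∧
          (∀ u : X, G [u] = some (phi1 u)) ∧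
          (∀ k : ℕ, 1 ≤ k → ∀ (x z : X) (y : List X), y.length + 1 = k →
            (side (k + 1) = true →
              (∀ a : X, G (x :: y) = some a →
                G (x :: (y ++ [z])) = some (phi (k + 1) a z)) ∧
              (∀ b : X, G (y ++ [z]) = some b →
                G (x :: (y ++ [z])) = G (x :: List.replicate k b))) ∧
            (side (k + 1) = false →
              (∀ b : X, G (y ++ [z]) = some b →
                G (x :: (y ++ [z])) = some (phi (k + 1) x b)) ∧
              (∀ a : X, G (x :: y) = some a →
                G (x :: (y ++ [z])) = G (List.replicate k a ++ [z])))))))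
    ∧
    -- If the conditions hold, then we can take F = G:
    (∀ G : List X → Option X,
      (∀ k : ℕ, 1 ≤ k → ∀ u v : X,
          (side (k + 1) = true →
            phi (k + 1) u v = phi (k + 1) (dphi phi1 phi k u) v) ∧
          (side (k + 1) = false →
            phi (k + 1) u v = phi (k + 1) u (dphi phi1 phi k v))) →
      (EpsStd G ∧ AWRI G ∧
        (∀ u : X, G [u] = some (phi1 u)) ∧
        (∀ k : ℕ, 1 ≤ k → ∀ (x z : X) (y : List X), y.length + 1 = k →
          (side (k + 1) = true →
            (∀ a : X, G (x :: y) = some a →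
              G (x :: (y ++ [z])) = some (phi (k + 1) a z)) ∧
            (∀ b : X, G (y ++ [z]) = some b →
              G (x :: (y ++ [z])) = G (x :: List.replicate k b))) ∧
          (side (k + 1) = false →
            (∀ b : X, G (y ++ [z]) = some b →
              G (x :: (y ++ [z])) = some (phi (k + 1) x b)) ∧
            (∀ a : X, G (x :: y) = some a →
              G (x :: (y ++ [z])) = G (List.replicate k a ++ [z]))))) →
      (BAssoc G ∧ EpsStd G ∧
        (∀ u : X, G [u] = some (phi1 u)) ∧
        (∀ k : ℕ, 2 ≤ k → ∀ u v : X,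
          (side k = true → G (List.replicate (k - 1) u ++ [v]) = some (phi k u v)) ∧
          (side k = false → G (u :: List.replicate (k - 1) v) = some (phi k u v))))) := by
  constructor
  · constructor
    · rintro ⟨F, hB, hE, h1, hsec⟩
      refine ⟨fwd_condA hB h1 hsec, F, hE, ?_, h1, fwd_condB hB hsec⟩
      intro w
      simpa using (hB [] w []).symm
    · rintro ⟨hA, G, hE, hAW, h1, hRec⟩
      exact ⟨G, suffMain phi1 phi side G hA hE hAW h1 hRec⟩
  · rintro G hA ⟨hE, hAW, h1, hRec⟩
    exact suffMain phi1 phi side G hA hE hAW h1 hRec
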